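/- Let f_n (n ∈ ℕ) and f be elements of X_Λ, i.e. f_n = log∘g_n and f = log∘g for some g_n, g ∈ X_M. For h ∈ X_Λ define J(h)(θ) = h(θ)/θ for θ ≠ 0 and J(h)(0) = liminf_{θ→0} h(θ)/θ. If f_n converges to f in the Attouch-Wets sense, then the closures in ℝ² of the epigraphs of J(f_n) converge to the closure of the epigraph of J(f): for every r > 0, sup_{x ∈ B̄_r} |dist(x, closure(epi(J(f_n)))) − dist(x, closure(epi(J(f))))| → 0 as n → ∞. -/

import Mathlib

open MeasureTheory Filter Metric Set
open scoped ENNReal Classical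

noncomputable section

/-- Epigraph of an extended-real-valued function on `ℝ`, as a subset of `ℝ²`
(which carries the box metric `dist p q = max |p₁-q₁| |p₂-q₂|`). -/
def epiE (f : ℝ → EReal) : Set (ℝ × ℝ) := {p | f p.1 ≤ (p.2 : EReal)}

/-- `awGap A B r` is `sup_{x ∈ B̄_r} |dist(x,A) - dist(x,B)|`. -/
def awGap (A B : Set (ℝ × ℝ)) (r : ℝ) : ℝ :=
  sSup ((fun x => |infDist x A - infDist x B|) '' closedBall (0 : ℝ × ℝ) r)

/-- Attouch–Wets convergence of a sequence of functions, via epigraphs. -/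
def AWTendsto (F : ℕ → ℝ → EReal) (f : ℝ → EReal) : Prop :=
  ∀ r : ℝ, 0 < r → Tendsto (fun n => awGap (epiE (F n)) (epiE f) r) atTop (nhds 0)

/-- The basic Attouch–Wets neighbourhood `V_k(f)`. -/
def Vk (k : ℕ) (f : ℝ → EReal) : Set (ℝ → EReal) :=
  {g | awGap (epiE g) (epiE f) (k : ℝ) < 1 / (k : ℝ)}

/-- Convexity for extended-real-valued functions on `ℝ`. -/
def ERConvex (f : ℝ → EReal) : Prop :=
  ∀ x y a b : ℝ, 0 ≤ a → 0 ≤ b → a + b = 1 →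
    f (a * x + b * y) ≤ (a : EReal) * f x + (b : EReal) * f y

/-- Effective domain of an extended-real-valued function. -/
def effDom (f : ℝ → EReal) : Set ℝ := {θ | f θ < ⊤}

/-- The moment generating function of a measure on `ℝ`, with values in `(0,∞]`. -/
def mgfE (ν : Measure ℝ) : ℝ → EReal :=
  fun θ => ((∫⁻ x, ENNReal.ofReal (Real.exp (θ * x)) ∂ν : ℝ≥0∞) : EReal)

/-- `log` of a probability, with the convention `log 0 = -∞`. -/
def elog (p : ℝ≥0∞) : EReal := if p = 0 then ⊥ else ((Real.log p.toReal : ℝ) : EReal)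

/-- The empirical moment generating function estimator
`M_n(θ) = (1/n) ∑_{i<n} exp (θ X_i)`. -/
def Mn {Ω : Type*} (X : ℕ → Ω → ℝ) (n : ℕ) (ω : Ω) : ℝ → EReal :=
  fun θ => (((n : ℝ)⁻¹ * ∑ i ∈ Finset.range n, Real.exp (θ * X i ω) : ℝ) : EReal)

/-- The rate value `I_M(f) = -inf_{k ≥ 1} limsup_n (1/n) log ℙ(M_n ∈ V_k(f))`. -/
def IM {Ω : Type*} [MeasurableSpace Ω] (P : Measure Ω) (X : ℕ → Ω → ℝ)
    (f : ℝ → EReal) : EReal :=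
  - ⨅ k ∈ Set.Ici 1, limsup
      (fun n : ℕ => (((n : ℝ)⁻¹ : ℝ) : EReal) * elog (P {ω | Mn X n ω ∈ Vk k f})) atTop

/-- `f` is lower semicontinuous, convex and `[0,∞]`-valued. -/
def IsAdm0 (f : ℝ → EReal) : Prop :=
  LowerSemicontinuous f ∧ ERConvex f ∧ ∀ θ, 0 ≤ f θ

/-- `log : (−∞,∞] → [−∞,∞]`, with `log ∞ = ∞` and `log x = -∞` for `x ≤ 0`. -/
def logE (x : EReal) : EReal :=
  if x = ⊤ then ⊤ else if x ≤ 0 then ⊥ else ((Real.log x.toReal : ℝ) : EReal)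

/-- Membership in `X_M`: lower semicontinuous convex `(0,∞]`-valued with
`f 0 = 1`, agreeing with the mgf of some probability measure where finite. -/
def InXM (f : ℝ → EReal) : Prop :=
  LowerSemicontinuous f ∧ ERConvex f ∧ (∀ θ, 0 < f θ) ∧ f 0 = 1 ∧
    ∃ ν : Measure ℝ, IsProbabilityMeasure ν ∧ ∀ θ, f θ < ⊤ → f θ = mgfE ν θ

/-- The Jarzynski operator `J(h)(θ) = h(θ)/θ` for `θ ≠ 0`, and
`J(h)(0) = liminf_{θ → 0} h(θ)/θ`. -/
def Jmap (h : ℝ → EReal) : ℝ → EReal := fun θ =>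
  if θ = 0 then
    liminf (fun t : ℝ => h t * ((t⁻¹ : ℝ) : EReal)) (nhdsWithin 0 {(0 : ℝ)}ᶜ)
  else h θ * ((θ⁻¹ : ℝ) : EReal)


def Good (h : ℝ → EReal) : Prop :=
  h 0 = 0 ∧ (∀ θ, h θ ≠ ⊥) ∧
  ∀ x y a b : ℝ, 0 < a → 0 < b → a + b = 1 →
    h (a*x + b*y) ≤ (a:EReal) * h x + (b:EReal) * h y

lemma ecases (x : EReal) : x = ⊥ ∨ (∃ u : ℝ, x = (u:EReal)) ∨ x = ⊤ := by
  induction x with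
  | bot => exact Or.inl rfl
  | coe u => exact Or.inr (Or.inl ⟨u, rfl⟩)
  | top => exact Or.inr (Or.inr rfl)

/-- slope monotonicity -/
lemma slope_mono {h : ℝ → EReal} (hg : Good h) {s t : ℝ} (hs : s ≠ 0) (ht : t ≠ 0)
    (hst : s < t) : h s * ((s⁻¹ : ℝ) : EReal) ≤ h t * ((t⁻¹ : ℝ) : EReal) := by
  obtain ⟨h0, hbot, hconv⟩ := hg
  rcases lt_trichotomy s 0 with hs0 | hs0 | hs0
  · rcases lt_trichotomy t 0 with ht0 | ht0 | ht0
    · -- s < t < 0 : h t ≤ (t/s) h s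
      have ha : (0:ℝ) < t/s := div_pos_of_neg_of_neg ht0 hs0
      have ha1 : t/s < 1 := by
        rw [div_lt_one_of_neg hs0]; linarith
      have key := hconv s 0 (t/s) (1 - t/s) ha (by linarith) (by ring)
      rw [h0] at key
      have harg : (t/s) * s + (1 - t/s) * 0 = t := by field_simp; ring
      rw [harg, mul_zero, add_zero] at key
      rcases ecases (h s) with hbs | ⟨u, hu⟩ | hts
      · exact absurd hbs (hbot s)
      · rw [hu] at key ⊢
        rw [← EReal.coe_mul] at key
        rcases ecases (h t) with hbt | ⟨w, hw⟩ | htt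
        · exact absurd hbt (hbot t)
        · rw [hw] at key ⊢
          rw [← EReal.coe_mul, ← EReal.coe_mul, EReal.coe_le_coe_iff] at *
          have hw' : w ≤ (t/s) * u := key
          rw [div_mul_eq_mul_div, le_div_iff_of_neg hs0] at hw'
          have hst0 : 0 < s*t := mul_pos_of_neg_of_neg hs0 ht0
          calc u * s⁻¹ = t*u/(s*t) := by field_simp
            _ ≤ w*s/(s*t) := (div_le_div_iff_of_pos_right hst0).2 hw'
            _ = w * t⁻¹ := by field_simp
        · rw [htt] at key
          exact absurd key (by simp [← EReal.coe_mul])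
      · rw [hts, EReal.top_mul_coe_of_neg (inv_neg''.2 hs0)]
        exact bot_le
    · exact absurd ht0 ht
    · -- s < 0 < t
      rcases ecases (h s) with hbs | ⟨u, hu⟩ | hts
      · exact absurd hbs (hbot s)
      · rcases ecases (h t) with hbt | ⟨w, hw⟩ | htt
        · exact absurd hbt (hbot t)
        · have ha : (0:ℝ) < t/(t-s) := div_pos ht0 (by linarith)
          have hb : (0:ℝ) < (-s)/(t-s) := div_pos (by linarith) (by linarith)
          have key := hconv s t (t/(t-s)) ((-s)/(t-s)) ha hb (by field_simp; rw [show t + -s = t - s by ring]; exact div_self (by linarith))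
          have harg : (t/(t-s)) * s + ((-s)/(t-s)) * t = 0 := by field_simp; ring
          rw [harg, h0, hu, hw, ← EReal.coe_mul, ← EReal.coe_mul, ← EReal.coe_add] at key
          have key' : (0:ℝ) ≤ t/(t-s) * u + (-s)/(t-s) * w := by exact_mod_cast key
          rw [hu, hw, ← EReal.coe_mul, ← EReal.coe_mul, EReal.coe_le_coe_iff]
          have hts' : (0:ℝ) < t - s := by linarith
          have : 0 ≤ t * u + (-s) * w := by
            have := mul_le_mul_of_nonneg_right key' (le_of_lt hts')
            field_simp at this
            nlinarith [this]
          have hst0 : s*t < 0 := mul_neg_of_neg_of_pos hs0 ht0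
          have hsw : s * w ≤ t * u := by linarith
          calc u * s⁻¹ = t*u/(s*t) := by field_simp
            _ ≤ s*w/(s*t) := (div_le_div_right_of_neg hst0).2 hsw
            _ = w * t⁻¹ := by field_simp
        · rw [hu, htt, EReal.top_mul_coe_of_pos (inv_pos.2 ht0), ← EReal.coe_mul]
          exact le_top
      · rw [hts, EReal.top_mul_coe_of_neg (inv_neg''.2 hs0)]
        exact bot_le
  · exact absurd hs0 hs
  · -- 0 < s < t
    have ht0 : (0:ℝ) < t := lt_trans hs0 hst
    have ha : (0:ℝ) < s/t := div_pos hs0 ht0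
    have ha1 : s/t < 1 := (div_lt_one ht0).2 hst
    have key := hconv t 0 (s/t) (1 - s/t) ha (by linarith) (by ring)
    rw [h0] at key
    have harg : (s/t) * t + (1 - s/t) * 0 = s := by field_simp; ring
    rw [harg, mul_zero, add_zero] at key
    rcases ecases (h t) with hbt | ⟨c, hc⟩ | htt
    · exact absurd hbt (hbot t)
    · rw [hc] at key ⊢
      rw [← EReal.coe_mul] at key
      rcases ecases (h s) with hbs | ⟨d, hd⟩ | hts
      · exact absurd hbs (hbot s)
      · rw [hd] at key ⊢
        rw [EReal.coe_le_coe_iff] at key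
        rw [← EReal.coe_mul, ← EReal.coe_mul, EReal.coe_le_coe_iff]
        have h1 : d * s⁻¹ ≤ (s/t) * c * s⁻¹ :=
          mul_le_mul_of_nonneg_right key (inv_nonneg.2 (le_of_lt hs0))
        calc d * s⁻¹ ≤ (s/t) * c * s⁻¹ := h1
          _ = c * t⁻¹ := by field_simp
      · rw [hts] at key
        exact absurd key (by simp [← EReal.coe_mul])
    · rw [htt, EReal.top_mul_coe_of_pos (inv_pos.2 ht0)]
      exact le_top



lemma logE_ne_bot_of_pos {x : EReal} (hx : 0 < x) : logE x ≠ ⊥ := by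
  unfold logE
  split_ifs with h1 h2
  · simp
  · exact absurd h2 (not_le.2 hx)
  · exact EReal.coe_ne_bot _

lemma logE_one : logE 1 = 0 := by
  unfold logE
  rw [if_neg (by intro h; exact absurd h (by exact_mod_cast EReal.coe_ne_top 1)),
     if_neg (by simp)]
  norm_num [EReal.toReal_one]

lemma logE_top : logE ⊤ = ⊤ := by unfold logE; simp

lemma ereal_coe_ennreal_fin {p : ℝ≥0∞} (h : p ≠ ⊤) :
    ((p : EReal)) = ((p.toReal : ℝ) : EReal) := by
  have h1 : (p:EReal) ≠ ⊤ := fun hh => h (EReal.coe_ennreal_eq_top_iff.1 hh)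
  rw [← EReal.coe_toReal h1 (EReal.coe_ennreal_ne_bot p), EReal.toReal_coe_ennreal]

lemma logE_coe_ennreal {p : ℝ≥0∞} (h0 : p ≠ 0) (ht : p ≠ ⊤) :
    logE (p : EReal) = ((Real.log p.toReal : ℝ) : EReal) := by
  unfold logE
  rw [if_neg (fun hh => ht (EReal.coe_ennreal_eq_top_iff.1 hh)),
      if_neg (not_le.2 (EReal.coe_ennreal_pos.2 (pos_iff_ne_zero.2 h0))),
      EReal.toReal_coe_ennreal]

lemma mgf_holder (ν : Measure ℝ) {x y a b : ℝ} (ha : 0 < a) (hb : 0 < b) (hab : a + b = 1) :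
    (∫⁻ z, ENNReal.ofReal (Real.exp ((a*x+b*y) * z)) ∂ν)
      ≤ (∫⁻ z, ENNReal.ofReal (Real.exp (x * z)) ∂ν) ^ a *
        (∫⁻ z, ENNReal.ofReal (Real.exp (y * z)) ∂ν) ^ b := by
  have ha1 : a < 1 := by linarith
  have hb1 : b < 1 := by linarith
  have hpq : (a⁻¹).HolderConjugate (b⁻¹) := by
    rw [Real.holderConjugate_iff]
    constructor
    · exact (one_lt_inv_iff₀).2 ⟨ha, ha1⟩
    · rw [inv_inv, inv_inv]; exact hab
  have hf : AEMeasurable (fun z : ℝ => (ENNReal.ofReal (Real.exp (x * z))) ^ a) ν := by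
    fun_prop
  have hg : AEMeasurable (fun z : ℝ => (ENNReal.ofReal (Real.exp (y * z))) ^ b) ν := by
    fun_prop
  have key := ENNReal.lintegral_mul_le_Lp_mul_Lq ν hpq hf hg
  simp only [Pi.mul_apply] at key
  have hpt : ∀ z : ℝ, ENNReal.ofReal (Real.exp ((a*x+b*y) * z))
      = (ENNReal.ofReal (Real.exp (x * z))) ^ a * (ENNReal.ofReal (Real.exp (y * z))) ^ b := by
    intro z
    rw [ENNReal.ofReal_rpow_of_pos (Real.exp_pos _), ENNReal.ofReal_rpow_of_pos (Real.exp_pos _),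
        ← ENNReal.ofReal_mul (by positivity)]
    congr 1
    rw [← Real.exp_mul, ← Real.exp_mul, ← Real.exp_add]
    ring_nf
  have hsimp1 : (∫⁻ z, ((ENNReal.ofReal (Real.exp (x * z))) ^ a) ^ (a⁻¹) ∂ν) ^ (1/a⁻¹)
      = (∫⁻ z, ENNReal.ofReal (Real.exp (x * z)) ∂ν) ^ a := by
    rw [one_div, inv_inv]
    congr 1
    refine lintegral_congr fun z => ?_
    rw [← ENNReal.rpow_mul, mul_inv_cancel₀ (ne_of_gt ha), ENNReal.rpow_one]
  have hsimp2 : (∫⁻ z, ((ENNReal.ofReal (Real.exp (y * z))) ^ b) ^ (b⁻¹) ∂ν) ^ (1/b⁻¹)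
      = (∫⁻ z, ENNReal.ofReal (Real.exp (y * z)) ∂ν) ^ b := by
    rw [one_div, inv_inv]
    congr 1
    refine lintegral_congr fun z => ?_
    rw [← ENNReal.rpow_mul, mul_inv_cancel₀ (ne_of_gt hb), ENNReal.rpow_one]
  calc (∫⁻ z, ENNReal.ofReal (Real.exp ((a*x+b*y) * z)) ∂ν)
      = ∫⁻ z, (ENNReal.ofReal (Real.exp (x * z))) ^ a * (ENNReal.ofReal (Real.exp (y * z))) ^ b ∂ν := by
        exact lintegral_congr hpt
    _ ≤ _ := by rw [← hsimp1, ← hsimp2]; exact key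

lemma slope_le_Jmap {h : ℝ → EReal} (hg : Good h) {s θ : ℝ} (hs : s < 0) (hsθ : s < θ) :
    h s * ((s⁻¹ : ℝ) : EReal) ≤ Jmap h θ := by
  by_cases hθ : θ = 0
  · subst hθ
    rw [Jmap]
    simp only [if_pos]
    refine Filter.le_liminf_of_le (by isBoundedDefault) ?_
    have hmem : Set.Ioo s (-s) ∈ nhds (0:ℝ) := Ioo_mem_nhds hs (by linarith)
    have h1 : ∀ᶠ t in nhdsWithin (0:ℝ) {(0:ℝ)}ᶜ, t ∈ Set.Ioo s (-s) :=
      eventually_nhdsWithin_of_eventually_nhds (eventually_of_mem hmem fun t ht => ht)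
    have h2 : ∀ᶠ t in nhdsWithin (0:ℝ) {(0:ℝ)}ᶜ, t ∈ ({(0:ℝ)}ᶜ : Set ℝ) :=
      self_mem_nhdsWithin
    filter_upwards [h1, h2] with t ht1 ht2
    exact slope_mono hg (ne_of_lt hs) (by simpa using ht2) ht1.1
  · rw [Jmap]
    simp only [if_neg hθ]
    exact slope_mono hg (ne_of_lt hs) hθ hsθ

lemma good_of_inXM {g : ℝ → EReal} (hg : InXM g) : Good (fun θ => logE (g θ)) := by
  obtain ⟨-, gconv, gpos, g0, ν, hν, hrep⟩ := hg
  refine ⟨by simp only; rw [g0]; exact logE_one, fun θ => logE_ne_bot_of_pos (gpos θ), ?_⟩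
  intro x y a b ha hb hab
  simp only
  by_cases hx : g x = ⊤
  · have h2 : (b:EReal) * logE (g y) ≠ ⊥ := by
      rcases ecases (logE (g y)) with hbt | ⟨u,hu⟩ | htt
      · exact absurd hbt (logE_ne_bot_of_pos (gpos y))
      · rw [hu, ← EReal.coe_mul]; exact EReal.coe_ne_bot _
      · rw [htt, EReal.coe_mul_top_of_pos hb]; simp
    rw [hx, logE_top, EReal.coe_mul_top_of_pos ha, EReal.top_add_of_ne_bot h2]
    exact le_top
  by_cases hy : g y = ⊤
  · have h2 : (a:EReal) * logE (g x) ≠ ⊥ := by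
      rcases ecases (logE (g x)) with hbt | ⟨u,hu⟩ | htt
      · exact absurd hbt (logE_ne_bot_of_pos (gpos x))
      · rw [hu, ← EReal.coe_mul]; exact EReal.coe_ne_bot _
      · rw [htt, EReal.coe_mul_top_of_pos ha]; simp
    rw [hy, logE_top, EReal.coe_mul_top_of_pos hb, EReal.add_top_of_ne_bot h2]
    exact le_top
  -- both finite
  set mx := ∫⁻ z, ENNReal.ofReal (Real.exp (x * z)) ∂ν with hmxd
  set my := ∫⁻ z, ENNReal.ofReal (Real.exp (y * z)) ∂ν with hmyd
  have hgx : g x = ((mx : ℝ≥0∞) : EReal) := hrep x (lt_top_iff_ne_top.2 hx)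
  have hgy : g y = ((my : ℝ≥0∞) : EReal) := hrep y (lt_top_iff_ne_top.2 hy)
  have hmxt : mx ≠ ⊤ := by
    intro hh; rw [hh] at hgx; exact hx (by rw [hgx]; rfl)
  have hmyt : my ≠ ⊤ := by
    intro hh; rw [hh] at hgy; exact hy (by rw [hgy]; rfl)
  have hmx0 : mx ≠ 0 := by
    intro hh
    have := gpos x; rw [hgx, hh] at this; simp at this
  have hmy0 : my ≠ 0 := by
    intro hh
    have := gpos y; rw [hgy, hh] at this; simp at this
  have hθt : g (a*x + b*y) < ⊤ := by
    have hcv := gconv x y a b ha.le hb.le hab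
    refine lt_of_le_of_lt hcv ?_
    apply EReal.add_lt_top
    · rw [hgx, ereal_coe_ennreal_fin hmxt, ← EReal.coe_mul]; exact EReal.coe_ne_top _
    · rw [hgy, ereal_coe_ennreal_fin hmyt, ← EReal.coe_mul]; exact EReal.coe_ne_top _
  set m := ∫⁻ z, ENNReal.ofReal (Real.exp ((a*x+b*y) * z)) ∂ν with hmd
  have hgm : g (a*x + b*y) = ((m : ℝ≥0∞) : EReal) := hrep _ hθt
  have hmt : m ≠ ⊤ := by
    intro hh; rw [hh] at hgm; rw [hgm] at hθt; simp at hθt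
  have hm0 : m ≠ 0 := by
    intro hh
    have := gpos (a*x+b*y); rw [hgm, hh] at this; simp at this
  have hH : m ≤ mx ^ a * my ^ b := mgf_holder ν ha hb hab
  rw [hgx, hgy, hgm, logE_coe_ennreal hm0 hmt, logE_coe_ennreal hmx0 hmxt,
    logE_coe_ennreal hmy0 hmyt, ← EReal.coe_mul, ← EReal.coe_mul, ← EReal.coe_add,
    EReal.coe_le_coe_iff]
  have hfin : mx ^ a * my ^ b ≠ ⊤ :=
    ENNReal.mul_ne_top (ENNReal.rpow_lt_top_of_nonneg ha.le hmxt).ne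
      (ENNReal.rpow_lt_top_of_nonneg hb.le hmyt).ne
  have h1 : m.toReal ≤ mx.toReal ^ a * my.toReal ^ b := by
    have := ENNReal.toReal_mono hfin hH
    rwa [ENNReal.toReal_mul, ← ENNReal.toReal_rpow, ← ENNReal.toReal_rpow] at this
  have hmxp : 0 < mx.toReal := ENNReal.toReal_pos hmx0 hmxt
  have hmyp : 0 < my.toReal := ENNReal.toReal_pos hmy0 hmyt
  have hmp : 0 < m.toReal := ENNReal.toReal_pos hm0 hmt
  calc Real.log m.toReal ≤ Real.log (mx.toReal ^ a * my.toReal ^ b) := Real.log_le_log hmp h1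
    _ = a * Real.log mx.toReal + b * Real.log my.toReal := by
        rw [Real.log_mul (Real.rpow_pos_of_pos hmxp a).ne' (Real.rpow_pos_of_pos hmyp b).ne',
          Real.log_rpow hmxp, Real.log_rpow hmyp]



lemma abs_infDist_sub_le {α : Type*} [PseudoMetricSpace α] (s : Set α) (x y : α) :
    |infDist x s - infDist y s| ≤ dist x y := by
  rw [abs_sub_le_iff]
  constructor
  · linarith [Metric.infDist_le_infDist_add_dist (s := s) (x := x) (y := y)]
  · linarith [Metric.infDist_le_infDist_add_dist (s := s) (x := y) (y := x), dist_comm x y]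

lemma awGap_bddAbove (A B : Set (ℝ×ℝ)) (r : ℝ) :
    BddAbove ((fun x => |infDist x A - infDist x B|) '' closedBall (0:ℝ×ℝ) r) := by
  refine ⟨2*r + |infDist 0 A - infDist 0 B|, ?_⟩
  rintro _ ⟨x, hx, rfl⟩
  have hx' : dist x 0 ≤ r := mem_closedBall.1 hx
  have h1 := abs_infDist_sub_le A x 0
  have h2 := abs_infDist_sub_le B x 0
  calc |infDist x A - infDist x B|
      ≤ |infDist x A - infDist 0 A| + |infDist 0 A - infDist x B| := abs_sub_le _ _ _
    _ ≤ |infDist x A - infDist 0 A| + (|infDist 0 A - infDist 0 B| + |infDist 0 B - infDist x B|) := by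
        linarith [abs_sub_le (infDist 0 A) (infDist 0 B) (infDist x B)]
    _ ≤ 2*r + |infDist 0 A - infDist 0 B| := by
        rw [abs_sub_comm (infDist x B)] at h2
        linarith

lemma le_awGap {A B : Set (ℝ×ℝ)} {r : ℝ} (x : ℝ×ℝ) (hx : x ∈ closedBall (0:ℝ×ℝ) r) :
    |infDist x A - infDist x B| ≤ awGap A B r :=
  le_csSup (awGap_bddAbove A B r) (mem_image_of_mem _ hx)

lemma awGap_nonneg (A B : Set (ℝ×ℝ)) {r : ℝ} (hr : 0 ≤ r) : 0 ≤ awGap A B r :=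
  le_trans (abs_nonneg _) (le_awGap 0 (mem_closedBall_self hr))

lemma awGap_comm (A B : Set (ℝ×ℝ)) (r : ℝ) : awGap A B r = awGap B A r := by
  unfold awGap
  congr 1
  ext v
  constructor <;> rintro ⟨x, hx, rfl⟩ <;> exact ⟨x, hx, (abs_sub_comm _ _)⟩

lemma awGap_points {A B : Set (ℝ×ℝ)} {R δ : ℝ} (hB : B.Nonempty)
    (hgap : awGap A B R < δ) {x : ℝ×ℝ} (hxA : x ∈ A) (hxr : x ∈ closedBall (0:ℝ×ℝ) R) :
    ∃ y ∈ B, dist x y < δ := by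
  have h1 : infDist x B < δ := by
    have h2 := le_awGap (A := A) (B := B) x hxr
    rw [infDist_zero_of_mem hxA, zero_sub, abs_neg, abs_of_nonneg infDist_nonneg] at h2
    linarith
  exact (infDist_lt_iff hB).1 h1

lemma awGap_le {A B : Set (ℝ×ℝ)} {r R ε : ℝ} (hr : 0 ≤ r) (hε : 0 ≤ ε) (hε1 : ε ≤ 1)
    (hA : A.Nonempty) (hB : B.Nonempty)
    (hR : 2*r + infDist 0 B + 2 ≤ R)
    (hAB : ∀ p ∈ A ∩ closedBall (0:ℝ×ℝ) R, infDist p B ≤ ε)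
    (hBA : ∀ p ∈ B ∩ closedBall (0:ℝ×ℝ) R, infDist p A ≤ ε) :
    awGap A B r ≤ ε := by
  refine Real.sSup_le ?_ hε
  rintro _ ⟨x, hx, rfl⟩
  have hxr : dist x 0 ≤ r := mem_closedBall.1 hx
  have hdxB : infDist x B ≤ infDist 0 B + r := by
    have := Metric.infDist_le_infDist_add_dist (s := B) (x := x) (y := 0)
    linarith
  have hd0B : (0:ℝ) ≤ infDist 0 B := infDist_nonneg
  have claim1 : infDist x A ≤ infDist x B + ε := by
    refine le_of_forall_pos_le_add fun η hη => ?_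
    obtain ⟨b, hbB, hbd⟩ := (infDist_lt_iff hB).1
      (lt_add_of_pos_right (infDist x B) (lt_min hη one_pos))
    have hb0 : dist b 0 ≤ R := by
      have h1 : dist b 0 ≤ dist b x + dist x 0 := dist_triangle _ _ _
      rw [dist_comm b x] at h1
      have h3 : dist x b < infDist x B + 1 :=
        lt_of_lt_of_le hbd (by linarith [min_le_right η 1])
      linarith
    have h4 := hBA b ⟨hbB, mem_closedBall.2 hb0⟩
    have h2 : infDist x A ≤ infDist b A + dist x b :=
      Metric.infDist_le_infDist_add_dist
    have h5 : infDist x A ≤ ε + infDist x B + min η 1 := by linarith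
    linarith [min_le_left η 1]
  have claim2 : infDist x B ≤ infDist x A + ε := by
    refine le_of_forall_pos_le_add fun η hη => ?_
    obtain ⟨a, haA, had⟩ := (infDist_lt_iff hA).1
      (lt_add_of_pos_right (infDist x A) (lt_min hη one_pos))
    have ha0 : dist a 0 ≤ R := by
      have h1 : dist a 0 ≤ dist a x + dist x 0 := dist_triangle _ _ _
      rw [dist_comm a x] at h1
      have h3 : dist x a < infDist x A + 1 :=
        lt_of_lt_of_le had (by linarith [min_le_right η 1])
      linarith
    have h4 := hAB a ⟨haA, mem_closedBall.2 ha0⟩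
    have h2 : infDist x B ≤ infDist a B + dist x a :=
      Metric.infDist_le_infDist_add_dist
    linarith [min_le_left η 1]
  rw [abs_sub_le_iff]
  constructor <;> linarith

lemma awGap_closure (A B : Set (ℝ×ℝ)) (r : ℝ) :
    awGap (closure A) (closure B) r = awGap A B r := by
  unfold awGap
  simp only [infDist_closure]

lemma mem_ball_box {p : ℝ×ℝ} {R : ℝ} :
    p ∈ closedBall (0:ℝ×ℝ) R ↔ |p.1| ≤ R ∧ |p.2| ≤ R := by
  rw [mem_closedBall, Prod.dist_eq, sup_le_iff]
  simp [Real.dist_eq]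

lemma dist_box (a b c d : ℝ) : dist ((a,b) : ℝ×ℝ) (c,d) = max |a - c| |b - d| := by
  rw [Prod.dist_eq]
  simp [Real.dist_eq]


lemma jepi_nonempty {h : ℝ → EReal} (hh : Good h) : (epiE (Jmap h)).Nonempty := by
  rcases ecases (h (-1)) with hb | ⟨u, hu⟩ | ht
  · exact absurd hb (hh.2.1 _)
  · refine ⟨((-1 : ℝ), |u|), ?_⟩
    show Jmap h (-1) ≤ ((|u| : ℝ) : EReal)
    rw [Jmap]
    simp only [if_neg (by norm_num : (-1:ℝ) ≠ 0)]
    rw [hu, ← EReal.coe_mul, EReal.coe_le_coe_iff,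
      show ((-1:ℝ))⁻¹ = -1 by norm_num, show u * (-1) = -u by ring]
    exact neg_le_abs u
  · refine ⟨((-1:ℝ), 0), ?_⟩
    show Jmap h (-1) ≤ ((0:ℝ):EReal)
    rw [Jmap]
    simp only [if_neg (by norm_num : (-1:ℝ) ≠ 0)]
    rw [ht, EReal.top_mul_coe_of_neg (by norm_num)]
    exact bot_le

set_option maxHeartbeats 2000000 in
lemma transfer {g h : ℝ → EReal} (hg : Good g) (hh : Good h) {ε R' : ℝ}
    (hε : 0 < ε) (hε1 : ε ≤ 1) (hR' : 1 ≤ R')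
    (hsub1 : ∀ p ∈ epiE h ∩ closedBall (0:ℝ×ℝ) (2*(R'+1)^2),
      ∃ q ∈ epiE g, dist p q < ε^3/(300*(R'+1)^3))
    (hsub2 : ∀ p ∈ epiE g ∩ closedBall (0:ℝ×ℝ) (2*(R'+1)^2),
      ∃ q ∈ epiE h, dist p q < ε^3/(300*(R'+1)^3)) :
    ∀ p ∈ epiE (Jmap h) ∩ closedBall (0:ℝ×ℝ) R',
      infDist p (epiE (Jmap g)) ≤ ε := by
  set δ := ε^3/(300*(R'+1)^3) with hδd
  clear_value δ
  have hR1 : (2:ℝ) ≤ R' + 1 := by linarith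
  have hδpos : 0 < δ := by rw [hδd]; positivity
  have hε3 : ε^3 ≤ ε^2 := by nlinarith [sq_nonneg ε]
  have hε2 : ε^2 ≤ ε := by nlinarith
  have hε2pos : 0 < ε^2 := by positivity
  have hδsmall : δ ≤ ε/300 := by
    rw [hδd, div_le_div_iff₀ (by positivity) (by norm_num)]
    have h8 : (1:ℝ) ≤ (R'+1)^3 := one_le_pow₀ (by linarith)
    nlinarith [pow_pos hε 3]
  have hkey : δ * (R' + 1) ≤ ε^3 / 300 := by
    rw [hδd, div_mul_eq_mul_div, div_le_div_iff₀ (by positivity) (by norm_num)]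
    have h9 : (R'+1) ≤ (R'+1)^3 := le_self_pow₀ (by linarith) (by norm_num)
    nlinarith [pow_pos hε 3]
  rintro ⟨θ, b⟩ ⟨hpe, hpb⟩
  obtain ⟨hθR, hbR⟩ := mem_ball_box.1 hpb
  have hθR' := abs_le.1 hθR
  have hbR' := abs_le.1 hbR
  have hpe' : Jmap h θ ≤ ((b:ℝ) : EReal) := hpe
  rcases le_or_gt θ (ε/8) with hcase | hcase
  · -- LEFT case: θ ≤ ε/8
    set t' := θ - ε/2 with ht'd
    clear_value t'
    have ht'0 : t' < 0 := by rw [ht'd]; linarith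
    by_cases hC : Jmap g t' ≤ ((b + ε : ℝ) : EReal)
    · have hCmem : ((t', b+ε) : ℝ×ℝ) ∈ epiE (Jmap g) := by exact hC
      refine le_trans (infDist_le_dist_of_mem hCmem) ?_
      rw [dist_box, show θ - t' = ε/2 by rw [ht'd]; ring, show b - (b+ε) = -ε by ring,
        abs_of_pos (by linarith : (0:ℝ) < ε/2), abs_neg, abs_of_pos hε]
      exact max_le (by linarith) le_rfl
    · exfalso
      have ht'ne : t' ≠ 0 := ne_of_lt ht'0
      rw [Jmap] at hC
      simp only [if_neg ht'ne] at hC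
      rcases ecases (g t') with hgb | ⟨u, hu⟩ | hgt
      · exact (hg.2.1 t') hgb
      swap
      · rw [hgt, EReal.top_mul_coe_of_neg (inv_neg''.2 ht'0)] at hC
        exact hC bot_le
      · rw [hu, ← EReal.coe_mul] at hC
        have hC' : b + ε < u * t'⁻¹ := by
          by_contra hcc
          exact hC (EReal.coe_le_coe_iff.2 (not_lt.1 hcc))
        have hu' : u < t' * (b + ε) := by
          have h5 := mul_lt_mul_of_neg_right hC' ht'0
          rw [inv_mul_cancel_right₀ ht'ne] at h5
          nlinarith [h5]
        have ht'abs : |t'| ≤ R' + 1 := by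
          rw [abs_le, ht'd]; constructor <;> linarith
        have hbeabs : |b + ε| ≤ R' + 1 := by
          rw [abs_le]; constructor <;> linarith
        have hmem : ((t', t' * (b+ε)) : ℝ×ℝ) ∈ epiE g := by
          show g t' ≤ ((t'*(b+ε) : ℝ) : EReal)
          rw [hu]; exact EReal.coe_le_coe_iff.2 (le_of_lt hu')
        have hball : ((t', t'*(b+ε)) : ℝ×ℝ) ∈ closedBall (0:ℝ×ℝ) (2*(R'+1)^2) := by
          rw [mem_ball_box]
          constructor
          · show |t'| ≤ 2*(R'+1)^2
            nlinarith [ht'abs]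
          · show |t' * (b+ε)| ≤ 2*(R'+1)^2
            calc |t' * (b+ε)| = |t'| * |b+ε| := abs_mul _ _
              _ ≤ (R'+1) * (R'+1) :=
                mul_le_mul ht'abs hbeabs (abs_nonneg _) (by linarith)
              _ ≤ 2*(R'+1)^2 := by nlinarith
        obtain ⟨⟨s, z⟩, hszB, hszd⟩ := hsub2 _ ⟨hmem, hball⟩
        rw [dist_box] at hszd
        have hd1 := abs_le.1 (le_of_lt (lt_of_le_of_lt (le_max_left _ _) hszd))
        have hd2 := abs_le.1 (le_of_lt (lt_of_le_of_lt (le_max_right _ _) hszd))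
        have hs0 : s < 0 := by
          have : s ≤ t' + δ := by linarith [hd1.2]
          rw [ht'd] at this
          linarith [hδsmall]
        have hsθ : s < θ := by
          have : s ≤ t' + δ := by linarith [hd1.2]
          rw [ht'd] at this
          linarith [hδsmall]
        have hslope := le_trans (slope_le_Jmap hh hs0 hsθ) hpe'
        rcases ecases (h s) with hsb | ⟨w, hw⟩ | hst
        · exact (hh.2.1 s) hsb
        swap
        · have := hszB
          rw [show ((s,z) : ℝ×ℝ) ∈ epiE h ↔ h s ≤ ((z:ℝ):EReal) from Iff.rfl, hst] at this
          exact absurd this (by simp)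
        · have hwz : w ≤ z := by
            have h6 : h s ≤ ((z:ℝ):EReal) := hszB
            rw [hw] at h6; exact EReal.coe_le_coe_iff.1 h6
          rw [hw, ← EReal.coe_mul] at hslope
          have hwb : w * s⁻¹ ≤ b := EReal.coe_le_coe_iff.1 hslope
          have hsb' : b * s ≤ w := by
            have h5 := mul_le_mul_of_nonpos_right hwb (le_of_lt hs0)
            rw [inv_mul_cancel_right₀ (ne_of_lt hs0)] at h5
            exact h5
          -- numeric contradiction
          have hz : z ≤ t' * (b+ε) + δ := by linarith [hd2.2]
          have hprod : |(t' - s) * b| ≤ δ * R' :=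
            (abs_mul _ _).le.trans
              (mul_le_mul (abs_le.2 hd1) hbR (abs_nonneg _) (le_of_lt hδpos))
          have hprod' := abs_le.1 hprod
          have ht'e : t' * ε ≤ (-3*ε/8) * ε :=
            mul_le_mul_of_nonneg_right (by rw [ht'd]; linarith) (le_of_lt hε)
          have ht'e2 : t' * ε ≤ -(3/8)*ε^2 := by
            calc t' * ε ≤ (-3*ε/8) * ε := ht'e
              _ = -(3/8)*ε^2 := by ring
          have hexp : t' * (b + ε) = t' * b + t' * ε := by ring
          have htb : t' * b - s * b ≤ δ * R' := by linarith [hprod'.2]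
          rw [hexp] at hz
          have hdd : δ*(R'+1) = δ*R' + δ := by ring
          nlinarith [hsb', hwz, hz, htb, ht'e2, hkey, hε3, hε2pos, hdd]
  · -- RIGHT case: θ > ε/8
    have hθ0 : 0 < θ := lt_trans (by positivity) hcase
    rw [Jmap] at hpe'
    simp only [if_neg (ne_of_gt hθ0)] at hpe'
    rcases ecases (h θ) with hbt | ⟨v, hv⟩ | htt
    · exact absurd hbt (hh.2.1 θ)
    swap
    · rw [htt, EReal.top_mul_coe_of_pos (inv_pos.2 hθ0)] at hpe'
      exact absurd hpe' (by simp)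
    · rw [hv, ← EReal.coe_mul] at hpe'
      have hvb : v * θ⁻¹ ≤ b := EReal.coe_le_coe_iff.1 hpe'
      have hvθb : v ≤ θ * b := by
        have h5 := mul_le_mul_of_nonneg_right hvb (le_of_lt hθ0)
        rw [inv_mul_cancel_right₀ (ne_of_gt hθ0)] at h5
        nlinarith [h5]
      have hmem : ((θ, θ*b) : ℝ×ℝ) ∈ epiE h := by
        show h θ ≤ ((θ*b:ℝ):EReal)
        rw [hv]; exact EReal.coe_le_coe_iff.2 hvθb
      have hball : ((θ, θ*b) : ℝ×ℝ) ∈ closedBall (0:ℝ×ℝ) (2*(R'+1)^2) := by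
        rw [mem_ball_box]
        constructor
        · show |θ| ≤ 2*(R'+1)^2
          nlinarith [hθR]
        · show |θ * b| ≤ 2*(R'+1)^2
          calc |θ * b| = |θ| * |b| := abs_mul _ _
            _ ≤ R' * R' := mul_le_mul hθR hbR (abs_nonneg _) (by linarith)
            _ ≤ 2*(R'+1)^2 := by nlinarith
      obtain ⟨⟨θ', y'⟩, hq, hqd⟩ := hsub1 _ ⟨hmem, hball⟩
      rw [dist_box] at hqd
      have hd1 := abs_le.1 (le_of_lt (lt_of_le_of_lt (le_max_left _ _) hqd))
      have hd2 := abs_le.1 (le_of_lt (lt_of_le_of_lt (le_max_right _ _) hqd))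
      have hθ'16 : ε/16 ≤ θ' := by
        have : θ - θ' ≤ δ := hd1.2
        linarith [hδsmall]
      have hθ'0 : 0 < θ' := by linarith
      have hqmem : ((θ', y'/θ') : ℝ×ℝ) ∈ epiE (Jmap g) := by
        show Jmap g θ' ≤ ((y'/θ' : ℝ) : EReal)
        rw [Jmap]
        simp only [if_neg (ne_of_gt hθ'0)]
        rcases ecases (g θ') with hgb | ⟨u, hu⟩ | hgt
        · rw [hgb, EReal.bot_mul_coe_of_pos (inv_pos.2 hθ'0)]; exact bot_le
        · have hq' : g θ' ≤ ((y':ℝ):EReal) := hq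
          rw [hu] at hq'
          have huy : u ≤ y' := EReal.coe_le_coe_iff.1 hq'
          rw [hu, ← EReal.coe_mul, EReal.coe_le_coe_iff, div_eq_mul_inv]
          exact mul_le_mul_of_nonneg_right huy (inv_nonneg.2 (le_of_lt hθ'0))
        · have hq' : g θ' ≤ ((y':ℝ):EReal) := hq
          rw [hgt] at hq'
          exact absurd hq' (by simp)
      refine le_trans (infDist_le_dist_of_mem hqmem) ?_
      rw [dist_box]
      apply max_le
      · rw [abs_le]; constructor <;> linarith [hδsmall]
      · have hθ'b : |θ'*b - y'| ≤ δ*(R'+1) := by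
          have h1 : |θ'*b - θ*b| ≤ δ*R' := by
            rw [show θ'*b - θ*b = (θ'-θ)*b by ring, abs_mul]
            refine mul_le_mul ?_ hbR (abs_nonneg _) (le_of_lt hδpos)
            rw [abs_le]; constructor <;> linarith
          calc |θ'*b - y'| ≤ |θ'*b - θ*b| + |θ*b - y'| := abs_sub_le _ _ _
            _ ≤ δ*R' + δ := by
                have := abs_le.2 hd2
                linarith [this]
            _ = δ*(R'+1) := by ring
        have heq : |b - y'/θ'| = |θ'*b - y'|/θ' := by
          rw [show b - y'/θ' = (θ'*b - y')/θ' by field_simp, abs_div,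
            abs_of_pos hθ'0]
        rw [heq, div_le_iff₀ hθ'0]
        have h7 : ε * (ε/16) ≤ ε * θ' := mul_le_mul_of_nonneg_left hθ'16 (le_of_lt hε)
        have h7' : ε^2/16 ≤ ε * θ' := by
          calc ε^2/16 = ε * (ε/16) := by ring
            _ ≤ ε * θ' := h7
        have h8' : ε * θ' = θ' * ε := by ring
        linarith [hθ'b, hkey, hε3, h7', h8']

/-- Continuity of the Jarzynski operator on `X_Λ` with respect to Attouch–Wets
convergence of the closures of epigraphs. -/
theorem jarzynski_continuous
    (F : ℕ → ℝ → EReal) (f : ℝ → EReal)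
    (hF : ∀ n, ∃ g : ℝ → EReal, InXM g ∧ F n = fun θ => logE (g θ))
    (hf : ∃ g : ℝ → EReal, InXM g ∧ f = fun θ => logE (g θ))
    (haw : AWTendsto F f) :
    ∀ r : ℝ, 0 < r →
      Tendsto (fun n =>
          awGap (closure (epiE (Jmap (F n)))) (closure (epiE (Jmap f))) r)
        atTop (nhds 0) := by
  intro r hr
  obtain ⟨gf, hgf, hfeq⟩ := hf
  have hGoodf : Good f := by rw [hfeq]; exact good_of_inXM hgf
  have hGoodF : ∀ n, Good (F n) := fun n => by
    obtain ⟨g, hg, he⟩ := hF n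
    rw [he]; exact good_of_inXM hg
  have hepif : (epiE f).Nonempty := ⟨((0:ℝ),(0:ℝ)), by
    show f 0 ≤ (((0:ℝ)):EReal)
    rw [hGoodf.1]; norm_num⟩
  have hepiF : ∀ n, (epiE (F n)).Nonempty := fun n => ⟨((0:ℝ),(0:ℝ)), by
    show F n 0 ≤ (((0:ℝ)):EReal)
    rw [(hGoodF n).1]; norm_num⟩
  have hJf : (epiE (Jmap f)).Nonempty := jepi_nonempty hGoodf
  have hJF : ∀ n, (epiE (Jmap (F n))).Nonempty := fun n => jepi_nonempty (hGoodF n)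
  set R' := 2*r + infDist 0 (epiE (Jmap f)) + 2 with hR'd
  have hd0 : 0 ≤ infDist (0:ℝ×ℝ) (epiE (Jmap f)) := infDist_nonneg
  have hR'1 : 1 ≤ R' := by rw [hR'd]; linarith
  rw [Metric.tendsto_atTop]
  intro ε₀ hε₀
  set ε := min (ε₀/2) 1 with hεd
  have hεpos : 0 < ε := lt_min (by linarith) one_pos
  have hε1 : ε ≤ 1 := min_le_right _ _
  have hδpos : 0 < ε^3/(300*(R'+1)^3) := by positivity
  have hR0 : 0 < 2*(R'+1)^2 := by positivity
  have hawR := haw (2*(R'+1)^2) hR0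
  rw [Metric.tendsto_atTop] at hawR
  obtain ⟨N, hN⟩ := hawR (ε^3/(300*(R'+1)^3)) hδpos
  refine ⟨N, fun n hn => ?_⟩
  have hgapn : awGap (epiE (F n)) (epiE f) (2*(R'+1)^2) < ε^3/(300*(R'+1)^3) := by
    have h1 := hN n hn
    rw [Real.dist_eq, sub_zero] at h1
    exact lt_of_le_of_lt (le_abs_self _) h1
  have hgapn' : awGap (epiE f) (epiE (F n)) (2*(R'+1)^2) < ε^3/(300*(R'+1)^3) := by
    rw [awGap_comm]; exact hgapn
  have hsubFf : ∀ p ∈ epiE (F n) ∩ closedBall (0:ℝ×ℝ) (2*(R'+1)^2),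
      ∃ q ∈ epiE f, dist p q < ε^3/(300*(R'+1)^3) :=
    fun p hp => awGap_points hepif hgapn hp.1 hp.2
  have hsubfF : ∀ p ∈ epiE f ∩ closedBall (0:ℝ×ℝ) (2*(R'+1)^2),
      ∃ q ∈ epiE (F n), dist p q < ε^3/(300*(R'+1)^3) :=
    fun p hp => awGap_points (hepiF n) hgapn' hp.1 hp.2
  have T1 : ∀ p ∈ epiE (Jmap f) ∩ closedBall (0:ℝ×ℝ) R',
      infDist p (epiE (Jmap (F n))) ≤ ε :=
    transfer (hGoodF n) hGoodf hεpos hε1 hR'1 hsubfF hsubFf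
  have T2 : ∀ p ∈ epiE (Jmap (F n)) ∩ closedBall (0:ℝ×ℝ) R',
      infDist p (epiE (Jmap f)) ≤ ε :=
    transfer hGoodf (hGoodF n) hεpos hε1 hR'1 hsubFf hsubfF
  have hgapJ : awGap (epiE (Jmap (F n))) (epiE (Jmap f)) r ≤ ε :=
    awGap_le hr.le hεpos.le hε1 (hJF n) hJf (le_of_eq hR'd.symm) T2 T1
  have hnonneg := awGap_nonneg (epiE (Jmap (F n))) (epiE (Jmap f)) hr.le
  rw [awGap_closure, Real.dist_eq, sub_zero, abs_of_nonneg hnonneg]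
  calc awGap (epiE (Jmap (F n))) (epiE (Jmap f)) r ≤ ε := hgapJ
    _ ≤ ε₀/2 := min_le_left _ _
    _ < ε₀ := by linarith

end
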